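/- Let {A, S, Π} be an S-node with S boundedly invertible, and let z, λ ∈ ℂ be such that I − zA* and I − λA are boundedly invertible (hence I − λ̄A* is boundedly invertible as well). Then, as operators on ℂ^{2p}: 𝔄(S,z) · J · 𝔄(S,λ̄)* = J − i(z − λ) Π*(I − zA*)^{−1} S^{−1} (I − λA)^{−1} Π. -/

import Mathlib

open Matrix MeasureTheory ContinuousLinearMap
open scoped ComplexOrder

noncomputable section

/-- The matrix (in the standard basis) of a continuous linear operator on `ℂ^p`. -/
def opToMat {p : ℕ} (T : EuclideanSpace ℂ (Fin p) →L[ℂ] EuclideanSpace ℂ (Fin p)) :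
    Matrix (Fin p) (Fin p) ℂ :=
  (Matrix.toEuclideanCLM (𝕜 := ℂ) (n := Fin p)).symm T

/-- The `2p × 2p` matrix `Π^* B Π` with blocks `Φ_i^* B Φ_j`, for `Π = [Φ₁ Φ₂]`. -/
def sandwich {p : ℕ} {H : Type*} [NormedAddCommGroup H] [InnerProductSpace ℂ H]
    [CompleteSpace H] (B : H →L[ℂ] H) (Φ₁ Φ₂ : EuclideanSpace ℂ (Fin p) →L[ℂ] H) :
    Matrix (Fin p ⊕ Fin p) (Fin p ⊕ Fin p) ℂ :=
  Matrix.fromBlocks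
    (opToMat (adjoint Φ₁ ∘L B ∘L Φ₁)) (opToMat (adjoint Φ₁ ∘L B ∘L Φ₂))
    (opToMat (adjoint Φ₂ ∘L B ∘L Φ₁)) (opToMat (adjoint Φ₂ ∘L B ∘L Φ₂))

/-- The frame `𝔄(S,z) = I_{2p} - i z Π^* (I - z A^*)⁻¹ S⁻¹ Π J` of an `S`-node,
identified with a `2p × 2p` complex matrix. -/
def frameS {p : ℕ} {H : Type*} [NormedAddCommGroup H] [InnerProductSpace ℂ H]
    [CompleteSpace H] (A S : H →L[ℂ] H) (Φ₁ Φ₂ : EuclideanSpace ℂ (Fin p) →L[ℂ] H)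
    (z : ℂ) : Matrix (Fin p ⊕ Fin p) (Fin p ⊕ Fin p) ℂ :=
  1 - (Complex.I * z) •
    (sandwich (Ring.inverse (1 - z • adjoint A) ∘L Ring.inverse S) Φ₁ Φ₂ *
      Matrix.fromBlocks 0 1 1 0)

/-- The `p × p` matrix `ρ(z,w) = i (w - z) Φ₂^* (I - z A^*)⁻¹ S⁻¹ (I - w A)⁻¹ Φ₂`. -/
def rhoS {p : ℕ} {H : Type*} [NormedAddCommGroup H] [InnerProductSpace ℂ H]
    [CompleteSpace H] (A S : H →L[ℂ] H) (Φ₂ : EuclideanSpace ℂ (Fin p) →L[ℂ] H)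
    (z w : ℂ) : Matrix (Fin p) (Fin p) ℂ :=
  (Complex.I * (w - z)) • opToMat (adjoint Φ₂ ∘L Ring.inverse (1 - z • adjoint A) ∘L
    Ring.inverse S ∘L Ring.inverse (1 - w • A) ∘L Φ₂)

/- ======================= auxiliary lemmas ======================= -/

lemma opToMat_mul {p : ℕ} (X Y : EuclideanSpace ℂ (Fin p) →L[ℂ] EuclideanSpace ℂ (Fin p)) :
    opToMat (X ∘L Y) = opToMat X * opToMat Y := by
  rw [← ContinuousLinearMap.mul_def]; exact map_mul _ _ _

lemma opToMat_add {p : ℕ} (X Y : EuclideanSpace ℂ (Fin p) →L[ℂ] EuclideanSpace ℂ (Fin p)) :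
    opToMat (X + Y) = opToMat X + opToMat Y := map_add _ _ _

lemma opToMat_smul {p : ℕ} (c : ℂ) (X : EuclideanSpace ℂ (Fin p) →L[ℂ] EuclideanSpace ℂ (Fin p)) :
    opToMat (c • X) = c • opToMat X := map_smul _ _ _

lemma opToMat_star {p : ℕ} (X : EuclideanSpace ℂ (Fin p) →L[ℂ] EuclideanSpace ℂ (Fin p)) :
    (opToMat X)ᴴ = opToMat (adjoint X) := by
  rw [← ContinuousLinearMap.star_eq_adjoint, ← Matrix.star_eq_conjTranspose]
  exact ((Matrix.toEuclideanCLM (𝕜 := ℂ) (n := Fin p)).symm.map_star' X).symm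

section SandwichLemmas

variable {p : ℕ} {H : Type*} [NormedAddCommGroup H] [InnerProductSpace ℂ H]
    [CompleteSpace H] (Φ₁ Φ₂ : EuclideanSpace ℂ (Fin p) →L[ℂ] H)

lemma sandwich_add (B C : H →L[ℂ] H) :
    sandwich (B + C) Φ₁ Φ₂ = sandwich B Φ₁ Φ₂ + sandwich C Φ₁ Φ₂ := by
  simp only [sandwich, ContinuousLinearMap.add_comp, ContinuousLinearMap.comp_add,
    opToMat_add, Matrix.fromBlocks_add]

lemma sandwich_smul (c : ℂ) (B : H →L[ℂ] H) :
    sandwich (c • B) Φ₁ Φ₂ = c • sandwich B Φ₁ Φ₂ := by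
  simp only [sandwich, ContinuousLinearMap.smul_comp, ContinuousLinearMap.comp_smul,
    opToMat_smul, Matrix.fromBlocks_smul]

lemma sandwich_sub (B C : H →L[ℂ] H) :
    sandwich (B - C) Φ₁ Φ₂ = sandwich B Φ₁ Φ₂ - sandwich C Φ₁ Φ₂ := by
  rw [sub_eq_add_neg, ← neg_one_smul ℂ C, sandwich_add, sandwich_smul, neg_one_smul,
    ← sub_eq_add_neg]

lemma sandwich_conjTranspose (B : H →L[ℂ] H) :
    (sandwich B Φ₁ Φ₂)ᴴ = sandwich (adjoint B) Φ₁ Φ₂ := by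
  simp only [sandwich, Matrix.fromBlocks_conjTranspose, opToMat_star, adjoint_comp,
    adjoint_adjoint, ContinuousLinearMap.comp_assoc]

lemma J_mul_J : (Matrix.fromBlocks 0 1 1 0 : Matrix (Fin p ⊕ Fin p) (Fin p ⊕ Fin p) ℂ) *
    Matrix.fromBlocks 0 1 1 0 = 1 := by
  rw [Matrix.fromBlocks_multiply]
  simp [Matrix.fromBlocks_one]

lemma sandwich_J_sandwich (B C : H →L[ℂ] H) :
    sandwich B Φ₁ Φ₂ * Matrix.fromBlocks 0 1 1 0 * sandwich C Φ₁ Φ₂ =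
      sandwich (B ∘L (Φ₁ ∘L adjoint Φ₂ + Φ₂ ∘L adjoint Φ₁) ∘L C) Φ₁ Φ₂ := by
  simp only [sandwich, Matrix.fromBlocks_multiply, Matrix.mul_zero, Matrix.zero_mul,
    Matrix.mul_one, Matrix.one_mul, zero_add, add_zero, ← opToMat_mul,
    ContinuousLinearMap.add_comp, ContinuousLinearMap.comp_add, opToMat_add,
    Matrix.fromBlocks_add, ContinuousLinearMap.comp_assoc, Matrix.fromBlocks_inj]
  refine ⟨?_, ?_, ?_, ?_⟩ <;> abel

end SandwichLemmas

lemma expand_prod {α : Type*} [Ring α] [Algebra ℂ α] (a b : ℂ) (M Jm N : α)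
    (hJJ : Jm * Jm = 1) :
    (1 - a • (M * Jm)) * Jm * (1 + b • (Jm * N)) =
      Jm + b • N - a • M - (a * b) • (M * (Jm * N)) := by
  have hc : ∀ X : α, Jm * (Jm * X) = X := fun X => by rw [← mul_assoc, hJJ, one_mul]
  have hc2 : M * Jm * Jm = M := by rw [mul_assoc, hJJ, mul_one]
  simp only [mul_add, add_mul, sub_mul, mul_sub, mul_one, one_mul, smul_mul_assoc,
    mul_smul_comm, smul_smul, mul_assoc, hc, hc2]
  module

/-- the fundamental identity
`𝔄(S,z) J 𝔄(S,conj λ)^* = J - i (z - λ) Π^* (I - z A^*)⁻¹ S⁻¹ (I - λ A)⁻¹ Π`. -/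
theorem frame_J_identity
    {p : ℕ} (hp : 1 ≤ p) {H : Type*} [NormedAddCommGroup H] [InnerProductSpace ℂ H]
    [CompleteSpace H] (A S : H →L[ℂ] H) (Φ₁ Φ₂ : EuclideanSpace ℂ (Fin p) →L[ℂ] H)
    (hS : IsSelfAdjoint S)
    (hnode : A ∘L S - S ∘L adjoint A =
      Complex.I • (Φ₁ ∘L adjoint Φ₂ + Φ₂ ∘L adjoint Φ₁))
    (hSinv : IsUnit S) (z lam : ℂ)
    (hz : IsUnit ((1 : H →L[ℂ] H) - z • adjoint A))
    (hlam : IsUnit ((1 : H →L[ℂ] H) - lam • A)) :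
    frameS A S Φ₁ Φ₂ z * Matrix.fromBlocks 0 1 1 0 *
        (frameS A S Φ₁ Φ₂ (starRingEnd ℂ lam))ᴴ =
      Matrix.fromBlocks 0 1 1 0 - (Complex.I * (z - lam)) •
        sandwich (Ring.inverse (1 - z • adjoint A) ∘L Ring.inverse S ∘L
          Ring.inverse (1 - lam • A)) Φ₁ Φ₂ := by
  -- abbreviations
  set A' : H →L[ℂ] H := adjoint A with hA'def
  set R : H →L[ℂ] H := Ring.inverse (1 - z • A') with hRdef
  set T : H →L[ℂ] H := Ring.inverse (1 - lam • A) with hTdef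
  set Si : H →L[ℂ] H := Ring.inverse S with hSidef
  -- adjoint computations
  have hadj : adjoint (Ring.inverse (1 - (starRingEnd ℂ lam) • A') ∘L Si) = Si ∘L T := by
    rw [adjoint_comp]
    congr 1
    · rw [hSidef, ← ContinuousLinearMap.star_eq_adjoint, ← Ring.inverse_star, hS.star_eq]
    · rw [← ContinuousLinearMap.star_eq_adjoint, ← Ring.inverse_star, hTdef]
      congr 1
      rw [star_sub, star_one, star_smul, hA'def, ← ContinuousLinearMap.star_eq_adjoint,
        star_star]
      simp
  -- conjugate transpose of the frame
  have hJct : (Matrix.fromBlocks 0 1 1 0 :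
      Matrix (Fin p ⊕ Fin p) (Fin p ⊕ Fin p) ℂ)ᴴ = Matrix.fromBlocks 0 1 1 0 := by
    simp [Matrix.fromBlocks_conjTranspose]
  have hframe_ct : (frameS A S Φ₁ Φ₂ (starRingEnd ℂ lam))ᴴ =
      1 + (Complex.I * lam) •
        (Matrix.fromBlocks 0 1 1 0 * sandwich (Si ∘L T) Φ₁ Φ₂) := by
    simp only [frameS]
    rw [Matrix.conjTranspose_sub, Matrix.conjTranspose_one, Matrix.conjTranspose_smul,
      Matrix.conjTranspose_mul, hJct, sandwich_conjTranspose, hadj]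
    rw [show star (Complex.I * (starRingEnd ℂ lam)) = -(Complex.I * lam) by
      simp only [Complex.star_def, _root_.map_mul, Complex.conj_I, Complex.conj_conj]; ring]
    rw [neg_smul, sub_neg_eq_add]
  -- node rearrangement
  have hPhi : Φ₁ ∘L adjoint Φ₂ + Φ₂ ∘L adjoint Φ₁ =
      (-Complex.I) • (A ∘L S - S ∘L A') := by
    rw [hA'def, hnode, smul_smul, neg_mul, Complex.I_mul_I, neg_neg, one_smul]
  -- resolvent identities
  have hTc : lam • (A * T) = T - 1 := by
    have h := Ring.mul_inverse_cancel _ hlam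
    rw [← hTdef, sub_mul, one_mul, smul_mul_assoc] at h
    rw [← h]; abel
  have hRc : z • (R * A') = R - 1 := by
    have h := Ring.inverse_mul_cancel _ hz
    rw [← hRdef, mul_sub, mul_one, mul_smul_comm] at h
    rw [← h]; abel
  have hS1 : Si * S = 1 := by rw [hSidef]; exact Ring.inverse_mul_cancel _ hSinv
  have hS2 : S * Si = 1 := by rw [hSidef]; exact Ring.mul_inverse_cancel _ hSinv
  -- the key operator identity
  have p1 : (R * Si) * ((A * S) * (Si * T)) = R * (Si * (A * T)) := by
    have : (R * Si) * ((A * S) * (Si * T)) = (R * (Si * A)) * ((S * Si) * T) := by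
      noncomm_ring
    rw [this, hS2, one_mul]; noncomm_ring
  have p2 : (R * Si) * ((S * A') * (Si * T)) = (R * A') * (Si * T) := by
    have : (R * Si) * ((S * A') * (Si * T)) = (R * (Si * S)) * (A' * (Si * T)) := by
      noncomm_ring
    rw [this, hS1, mul_one]; noncomm_ring
  have q1 : lam • (R * (Si * (A * T))) = R * (Si * T) - R * Si := by
    rw [← mul_smul_comm, ← mul_smul_comm, hTc, mul_sub, mul_sub, mul_one]
  have q2 : z • ((R * A') * (Si * T)) = R * (Si * T) - Si * T := by
    rw [← smul_mul_assoc, hRc, sub_mul, one_mul]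
  have hkey : (Complex.I * lam) • (Si ∘L T) - (Complex.I * z) • (R ∘L Si) +
      (z * lam) • ((R ∘L Si) ∘L ((-Complex.I) • (A ∘L S - S ∘L A')) ∘L (Si ∘L T)) =
      (-(Complex.I * (z - lam))) • (R ∘L (Si ∘L T)) := by
    simp only [← ContinuousLinearMap.mul_def]
    have inner : (R * Si) * (((-Complex.I) • (A * S - S * A')) * (Si * T)) =
        (-Complex.I) • (R * (Si * (A * T))) - (-Complex.I) • ((R * A') * (Si * T)) := by
      simp only [smul_mul_assoc, sub_mul, smul_sub, mul_sub, mul_smul_comm]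
      rw [p1, p2]
    rw [inner]
    calc (Complex.I * lam) • (Si * T) - (Complex.I * z) • (R * Si) +
          (z * lam) • ((-Complex.I) • (R * (Si * (A * T))) -
            (-Complex.I) • ((R * A') * (Si * T)))
        = (Complex.I * lam) • (Si * T) - (Complex.I * z) • (R * Si) +
            ((-Complex.I * z) • (lam • (R * (Si * (A * T)))) -
              (-Complex.I * lam) • (z • ((R * A') * (Si * T)))) := by module
      _ = (Complex.I * lam) • (Si * T) - (Complex.I * z) • (R * Si) +
            ((-Complex.I * z) • (R * (Si * T) - R * Si) -
              (-Complex.I * lam) • (R * (Si * T) - Si * T)) := by rw [q1, q2]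
      _ = (-(Complex.I * (z - lam))) • (R * (Si * T)) := by module
  -- assemble
  rw [hframe_ct]
  simp only [frameS, ← hRdef, ← hSidef, ← hA'def]
  rw [expand_prod _ _ _ _ _ J_mul_J]
  rw [← Matrix.mul_assoc, sandwich_J_sandwich, hPhi]
  calc Matrix.fromBlocks 0 1 1 0 + (Complex.I * lam) • sandwich (Si ∘L T) Φ₁ Φ₂ -
        (Complex.I * z) • sandwich (R ∘L Si) Φ₁ Φ₂ -
        (Complex.I * z * (Complex.I * lam)) •
          sandwich ((R ∘L Si) ∘L ((-Complex.I) • (A ∘L S - S ∘L A')) ∘L (Si ∘L T)) Φ₁ Φ₂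
      = Matrix.fromBlocks 0 1 1 0 +
          sandwich ((Complex.I * lam) • (Si ∘L T) - (Complex.I * z) • (R ∘L Si) +
            (z * lam) • ((R ∘L Si) ∘L ((-Complex.I) • (A ∘L S - S ∘L A')) ∘L (Si ∘L T)))
            Φ₁ Φ₂ := by
        rw [sandwich_add, sandwich_sub, sandwich_smul, sandwich_smul, sandwich_smul]
        have hc : Complex.I * z * (Complex.I * lam) = -(z * lam) := by
          ring_nf
          rw [Complex.I_sq]
          ring
        rw [hc]
        module
    _ = Matrix.fromBlocks 0 1 1 0 +
          sandwich ((-(Complex.I * (z - lam))) • (R ∘L (Si ∘L T))) Φ₁ Φ₂ := by rw [hkey]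
    _ = Matrix.fromBlocks 0 1 1 0 -
          (Complex.I * (z - lam)) • sandwich (R ∘L Si ∘L T) Φ₁ Φ₂ := by
        rw [sandwich_smul, neg_smul]
        abel

end
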